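/- For any election E = (V, C, σ), there exists a candidate a ∈ C whose integral domination graph G(a) admits a perfect matching; that is, there exists a bijection M : V → V such that for every voter i ∈ V, candidate a is weakly preferred by i to the top choice of voter M(i): a ⪰_i top(M(i)). -/

import Mathlib

/-- Every nonempty finite set has a least element w.r.t. a trichotomous transitive relation. -/
private lemma exists_least {α : Type*} (r : α → α → Prop)
    (htri : ∀ a b : α, r a b ∨ a = b ∨ r b a)
    (htr : ∀ a b c : α, r a b → r b c → r a c) :
    ∀ s : Finset α, s.Nonempty → ∃ c ∈ s, ∀ x ∈ s, x = c ∨ r x c := by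
  classical
  intro s
  induction s using Finset.induction_on with
  | empty => intro h; exact absurd h (by simp)
  | @insert a s ha ih =>
    intro _
    rcases s.eq_empty_or_nonempty with rfl | hs
    · exact ⟨a, by simp, by simp⟩
    · obtain ⟨c, hc, hmin⟩ := ih hs
      rcases htri a c with h | h | h
      · refine ⟨c, Finset.mem_insert_of_mem hc, ?_⟩
        intro x hx
        rcases Finset.mem_insert.1 hx with rfl | hx
        · exact Or.inr h
        · exact hmin x hx
      · subst h
        refine ⟨a, Finset.mem_insert_self _ _, ?_⟩
        intro x hx
        rcases Finset.mem_insert.1 hx with rfl | hx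
        · exact Or.inl rfl
        · exact hmin x hx
      · refine ⟨a, Finset.mem_insert_self _ _, ?_⟩
        intro x hx
        rcases Finset.mem_insert.1 hx with rfl | hx
        · exact Or.inl rfl
        · rcases hmin x hx with rfl | hxc
          · exact Or.inr h
          · exact Or.inr (htr _ _ _ hxc h)

private lemma key {V C : Type*} (σ : V → C → C → Prop)
    (hσ : ∀ i, IsStrictTotalOrder C (σ i)) (top : V → C) :
    ∀ n : ℕ, ∀ L R : Finset V, L.card = n → R.card = n → R.Nonempty →
      ∃ a : C, (∃ j ∈ R, top j = a) ∧ ∃ M : V → V,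
        Set.InjOn M ↑L ∧ (∀ i ∈ L, M i ∈ R) ∧
        ∀ i ∈ L, a = top (M i) ∨ σ i a (top (M i)) := by
  classical
  intro n
  induction n with
  | zero =>
    intro L R hL hR hRne
    have := hRne.card_pos
    omega
  | succ n ih =>
    intro L R hL hR hRne
    have hLne : L.Nonempty := Finset.card_pos.1 (by omega)
    obtain ⟨i₁, hi₁⟩ := hLne
    haveI := hσ i₁
    obtain ⟨c, hc, hmin⟩ := exists_least (σ i₁)
      (fun a b => trichotomous_of (σ i₁) a b)
      (fun a b c hab hbc => trans_of (σ i₁) hab hbc)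
      (R.image top) (hRne.image top)
    obtain ⟨j₁, hj₁R, hj₁⟩ := Finset.mem_image.1 hc
    by_cases hn : n = 0
    · subst hn
      refine ⟨c, ⟨j₁, hj₁R, hj₁⟩, fun _ => j₁, ?_, ?_, ?_⟩
      · intro x hx y hy _
        exact Finset.card_le_one.1 (by omega) x hx y hy
      · intro i _; exact hj₁R
      · intro i _
        exact Or.inl (by rw [hj₁])
    · have hL' : (L.erase i₁).card = n := by
        rw [Finset.card_erase_of_mem hi₁, hL]; omega
      have hR' : (R.erase j₁).card = n := by
        rw [Finset.card_erase_of_mem hj₁R, hR]; omega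
      have hR'ne : (R.erase j₁).Nonempty := Finset.card_pos.1 (by omega)
      obtain ⟨a, ⟨j, hjR', hj⟩, M', hinj, hmaps, hdom⟩ :=
        ih (L.erase i₁) (R.erase j₁) hL' hR' hR'ne
      have hamem : a ∈ R.image top :=
        Finset.mem_image.2 ⟨j, Finset.mem_of_mem_erase hjR', hj⟩
      refine ⟨a, ⟨j, Finset.mem_of_mem_erase hjR', hj⟩,
        Function.update M' i₁ j₁, ?_, ?_, ?_⟩
      · intro x hx y hy hxy
        by_cases hxi : x = i₁ <;> by_cases hyi : y = i₁
        · rw [hxi, hyi]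
        · exfalso
          have hyL' : y ∈ L.erase i₁ := Finset.mem_erase.2 ⟨hyi, hy⟩
          have : M' y ∈ R.erase j₁ := hmaps y hyL'
          have hne : M' y ≠ j₁ := (Finset.mem_erase.1 this).1
          rw [hxi] at hxy
          rw [Function.update_self, Function.update_of_ne hyi] at hxy
          exact hne hxy.symm
        · exfalso
          have hxL' : x ∈ L.erase i₁ := Finset.mem_erase.2 ⟨hxi, hx⟩
          have : M' x ∈ R.erase j₁ := hmaps x hxL'
          have hne : M' x ≠ j₁ := (Finset.mem_erase.1 this).1
          rw [hyi] at hxy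
          rw [Function.update_self, Function.update_of_ne hxi] at hxy
          exact hne hxy
        · rw [Function.update_of_ne hxi, Function.update_of_ne hyi] at hxy
          exact hinj (Finset.mem_coe.2 (Finset.mem_erase.2 ⟨hxi, hx⟩))
            (Finset.mem_coe.2 (Finset.mem_erase.2 ⟨hyi, hy⟩)) hxy
      · intro i hi
        by_cases hii : i = i₁
        · rw [hii, Function.update_self]; exact hj₁R
        · rw [Function.update_of_ne hii]
          exact Finset.mem_of_mem_erase (hmaps i (Finset.mem_erase.2 ⟨hii, hi⟩))
      · intro i hi
        by_cases hii : i = i₁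
        · subst hii
          rw [Function.update_self, hj₁]
          rcases hmin a hamem with rfl | hac
          · exact Or.inl rfl
          · exact Or.inr hac
        · rw [Function.update_of_ne hii]
          exact hdom i (Finset.mem_erase.2 ⟨hii, hi⟩)

/-- There is a candidate whose integral domination graph admits a perfect matching. -/
theorem stmt2 {V C : Type*} [Fintype V] [Fintype C] [Nonempty V] [Nonempty C]
    (σ : V → C → C → Prop) (hσ : ∀ i, IsStrictTotalOrder C (σ i))
    (top : V → C) (htop : ∀ i c, c ≠ top i → σ i (top i) c) :
    ∃ a : C, ∃ M : V ≃ V, ∀ i : V, a = top (M i) ∨ σ i a (top (M i)) := by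
  classical
  obtain ⟨a, -, M, hinj, -, hdom⟩ :=
    key σ hσ top (Fintype.card V) Finset.univ Finset.univ
      (by simp) (by simp) Finset.univ_nonempty
  have hinj' : Function.Injective M := by
    have : Set.InjOn M Set.univ := by simpa using hinj
    exact Set.injOn_univ.1 this
  have hbij : Function.Bijective M := Finite.injective_iff_bijective.1 hinj'
  exact ⟨a, Equiv.ofBijective M hbij, fun i => hdom i (Finset.mem_univ i)⟩
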